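/- Let f be a Boolean network, x, y ∈ 𝔹^n, and suppose y belongs to an attractor of the most permissive semantics. Then y ∈ Reach_f(x) if and only if y ∈ γ(ẑ^∅), where ẑ^∅ is obtained from x by exhaustively applying Boolean-to-dynamic transitions to all components; moreover, whenever y ∈ γ(ẑ^∅), for every component i with ẑ^∅_i ∉ 𝔹 there exists z ∈ γ(ẑ^∅) with f_i(z) = y_i. -/

import Mathlib

inductive PState : Type
  | zero | up | down | one
deriving DecidableEq

def PState.ofBool : Bool → PState
  | false => .zero
  | true  => .one

def PState.isBool (p : PState) : Prop := p = .zero ∨ p = .one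

abbrev BN (n : ℕ) := (Fin n → Bool) → Fin n → Bool

def gamma {n : ℕ} (x : Fin n → PState) : Set (Fin n → Bool) :=
  {b | ∀ i (v : Bool), x i = PState.ofBool v → b i = v}

def mpStep {n : ℕ} (f : BN n) (x y : Fin n → PState) : Prop :=
  ∃ i : Fin n, x i ≠ y i ∧ (∀ j, j ≠ i → x j = y j) ∧
    ((y i = .up ∧ x i ≠ .one ∧ ∃ z ∈ gamma x, f z i = true) ∨
     (y i = .one ∧ x i = .up) ∨
     (y i = .down ∧ x i ≠ .zero ∧ ∃ z ∈ gamma x, f z i = false) ∨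
     (y i = .zero ∧ x i = .down))

def mpReachP {n : ℕ} (f : BN n) : (Fin n → PState) → (Fin n → PState) → Prop :=
  Relation.ReflTransGen (mpStep f)

def embed {n : ℕ} (x : Fin n → Bool) : Fin n → PState := fun i => PState.ofBool (x i)

def mpReach {n : ℕ} (f : BN n) (x : Fin n → Bool) : Set (Fin n → Bool) :=
  {y | mpReachP f (embed x) (embed y)}

def cubeSet {n : ℕ} (h : Fin n → Option Bool) : Set (Fin n → Bool) :=
  {z | ∀ i b, h i = some b → z i = b}

def smaller {n : ℕ} (h h' : Fin n → Option Bool) : Prop :=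
  ∀ i b, h' i = some b → h i = some b

def kClosed {n : ℕ} (f : BN n) (K : Finset (Fin n)) (h : Fin n → Option Bool) : Prop :=
  ∀ z ∈ cubeSet h, ∀ i ∈ K, h i = none ∨ h i = some (f z i)

def closedBy {n : ℕ} (f : BN n) (h : Fin n → Option Bool) : Prop :=
  ∀ z ∈ cubeSet h, f z ∈ cubeSet h

def smallestClosed {n : ℕ} (f : BN n) (x : Fin n → Bool) (h : Fin n → Option Bool) : Prop :=
  x ∈ cubeSet h ∧ closedBy f h ∧
    ∀ h', x ∈ cubeSet h' → closedBy f h' → smaller h h'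

def minClosed {n : ℕ} (f : BN n) (h : Fin n → Option Bool) : Prop :=
  closedBy f h ∧ ∀ h', closedBy f h' → smaller h' h → h' = h

def faStep {n : ℕ} (f : BN n) (x y : Fin n → Bool) : Prop :=
  ∃ i : Fin n, x i ≠ y i ∧ (∀ j, j ≠ i → x j = y j) ∧ y i = f x i

def aStep {n : ℕ} (f : BN n) (x y : Fin n → Bool) : Prop :=
  x ≠ y ∧ ∀ i, x i ≠ y i → y i = f x i

def mnStep {n m : ℕ} (F : (Fin n → Fin (m+1)) → Fin n → ℤ)
    (x y : Fin n → Fin (m+1)) : Prop :=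
  x ≠ y ∧ ∀ i, x i ≠ y i → ((y i : ℤ) = (x i : ℤ) + F x i)

def beta {n m : ℕ} (x : Fin n → Fin (m+1)) : Set (Fin n → Bool) :=
  {b | ∀ i, ((x i : ℕ) = 0 → b i = false) ∧ ((x i : ℕ) = m → b i = true)}

def refines {n m : ℕ} (F : (Fin n → Fin (m+1)) → Fin n → ℤ) (f : BN n) : Prop :=
  ∀ x i, (F x i > 0 → ∃ b ∈ beta x, f b i = true) ∧
         (F x i < 0 → ∃ b ∈ beta x, f b i = false)

def alpha {n m : ℕ} (x : Fin n → Fin (m+1)) : Set (Fin n → PState) :=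
  {p | ∀ i, ((x i : ℕ) = 0 ↔ p i = .zero) ∧ ((x i : ℕ) = m ↔ p i = .one)}

def bdStep {n : ℕ} (f : BN n) (L : Finset (Fin n)) (a b : Fin n → PState) : Prop :=
  mpStep f a b ∧ ∃ j, a j ≠ b j ∧ j ∉ L ∧ (a j).isBool ∧ ¬ (b j).isBool

def exhaustive {n : ℕ} (f : BN n) (x : Fin n → Bool) (L : Finset (Fin n))
    (zhat : Fin n → PState) : Prop :=
  Relation.ReflTransGen (bdStep f L) (embed x) zhat ∧ ∀ z', ¬ bdStep f L zhat z'

namespace Stmt19Aux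

open PState

variable {n : ℕ}

lemma ofBool_inj {v w : Bool} (h : PState.ofBool v = PState.ofBool w) : v = w := by
  cases v <;> cases w <;> simp_all [PState.ofBool]

lemma ofBool_isBool (v : Bool) : (PState.ofBool v).isBool := by
  cases v
  · exact Or.inl rfl
  · exact Or.inr rfl

/-- agreement with boolean components -/
def Inv (zhat p : Fin n → PState) : Prop :=
  ∀ i v, zhat i = PState.ofBool v → p i = PState.ofBool v

lemma gamma_sub {zhat p : Fin n → PState} (hI : Inv zhat p) : gamma p ⊆ gamma zhat :=
  fun z hzz i v hv => hzz i v (hI i v hv)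

lemma bd_facts (f : BN n) (x : Fin n → Bool) (zhat : Fin n → PState)
    (h : Relation.ReflTransGen (bdStep f ∅) (embed x) zhat) :
    (∀ i v, zhat i = PState.ofBool v → x i = v) ∧
    (∀ i, (zhat i = .up → ∃ z ∈ gamma zhat, f z i = true) ∧
          (zhat i = .down → ∃ z ∈ gamma zhat, f z i = false)) := by
  induction h with
  | refl =>
    refine ⟨fun i v hv => ofBool_inj hv, fun i => ⟨fun hv => ?_, fun hv => ?_⟩⟩
    · exact absurd hv (by cases hx : x i <;> simp [embed, PState.ofBool, hx])
    · exact absurd hv (by cases hx : x i <;> simp [embed, PState.ofBool, hx])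
  | @tail b c hab hbc ih =>
    obtain ⟨⟨i, hne, heq, hcase⟩, j, hj1, _, hjB, hjNB⟩ := hbc
    have hji : j = i := by
      by_contra hji
      exact hj1 (heq j hji)
    subst hji
    have hsub : gamma b ⊆ gamma c := by
      intro z hzz k v hv
      by_cases hk : k = j
      · subst hk
        exact absurd (hv ▸ ofBool_isBool v) hjNB
      · exact hzz k v ((heq k hk) ▸ hv)
    have hcNB : ∀ v, c j ≠ PState.ofBool v := by
      intro v hv
      exact hjNB (hv ▸ ofBool_isBool v)
    have part1 : ∀ k v, c k = PState.ofBool v → x k = v := by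
      intro k v hv
      by_cases hk : k = j
      · subst hk; exact absurd hv (hcNB v)
      · exact ih.1 k v ((heq k hk) ▸ hv)
    refine ⟨part1, fun k => ⟨fun hk => ?_, fun hk => ?_⟩⟩
    · by_cases hkj : k = j
      · subst hkj
        rcases hcase with ⟨_, _, z, hzg, hfz⟩ | ⟨_, hbj⟩ | ⟨hdn, _, _⟩ | ⟨hz0, _⟩
        · exact ⟨z, hsub hzg, hfz⟩
        · exact absurd (hbj ▸ hjB) (by simp [PState.isBool])
        · rw [hk] at hdn; exact absurd hdn (by simp)
        · rw [hk] at hz0; exact absurd hz0 (by simp)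
      · obtain ⟨z, hzg, hfz⟩ := (ih.2 k).1 ((heq k hkj) ▸ hk)
        exact ⟨z, hsub hzg, hfz⟩
    · by_cases hkj : k = j
      · subst hkj
        rcases hcase with ⟨hup, _, _⟩ | ⟨_, hbj⟩ | ⟨_, _, z, hzg, hfz⟩ | ⟨_, hbj⟩
        · rw [hk] at hup; exact absurd hup (by simp)
        · exact absurd (hbj ▸ hjB) (by simp [PState.isBool])
        · exact ⟨z, hsub hzg, hfz⟩
        · exact absurd (hbj ▸ hjB) (by simp [PState.isBool])
      · obtain ⟨z, hzg, hfz⟩ := (ih.2 k).2 ((heq k hkj) ▸ hk)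
        exact ⟨z, hsub hzg, hfz⟩

lemma closed (f : BN n) (x : Fin n → Bool) (zhat : Fin n → PState)
    (hz : exhaustive f x ∅ zhat) :
    ∀ z ∈ gamma zhat, ∀ i v, zhat i = PState.ofBool v → f z i = v := by
  intro z hzg i v hv
  by_contra hne
  have hfv : f z i = !v := by cases hf : f z i <;> cases v <;> simp_all
  apply hz.2 (Function.update zhat i (if v then .down else .up))
  constructor
  · refine ⟨i, ?_, fun j hj => (Function.update_of_ne hj _ _).symm, ?_⟩
    · rw [hv, Function.update_self]; cases v <;> simp [PState.ofBool]
    · cases v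
      · exact Or.inl ⟨by simp [Function.update_self], by rw [hv]; simp [PState.ofBool], z, hzg, by simpa using hfv⟩
      · refine Or.inr (Or.inr (Or.inl ⟨by simp [Function.update_self], by rw [hv]; simp [PState.ofBool], z, hzg, by simpa using hfv⟩))
  · refine ⟨i, ?_, Finset.notMem_empty i, hv ▸ ofBool_isBool v, ?_⟩
    · rw [hv, Function.update_self]; cases v <;> simp [PState.ofBool]
    · rw [Function.update_self]; cases v <;> simp [PState.isBool]

lemma Inv_step {f : BN n} {zhat : Fin n → PState}
    (hcl : ∀ z ∈ gamma zhat, ∀ i v, zhat i = PState.ofBool v → f z i = v)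
    {p q : Fin n → PState} (hs : mpStep f p q) (hI : Inv zhat p) : Inv zhat q := by
  obtain ⟨i, hne, heq, hcase⟩ := hs
  intro k v hv
  by_cases hk : k = i
  · subst hk
    exfalso
    have hp := hI k v hv
    rcases hcase with ⟨hq, h1, z, hzg, hfz⟩ | ⟨hq, hp'⟩ | ⟨hq, h0, z, hzg, hfz⟩ | ⟨hq, hp'⟩
    · have := hcl z (gamma_sub hI hzg) k v hv
      cases v <;> simp_all [PState.ofBool]
    · rw [hp] at hp'; cases v <;> simp [PState.ofBool] at hp'
    · have := hcl z (gamma_sub hI hzg) k v hv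
      cases v <;> simp_all [PState.ofBool]
    · rw [hp] at hp'; cases v <;> simp [PState.ofBool] at hp'
  · rw [← heq k hk]; exact hI k v hv

lemma Inv_reach {f : BN n} {zhat : Fin n → PState}
    (hcl : ∀ z ∈ gamma zhat, ∀ i v, zhat i = PState.ofBool v → f z i = v)
    {p q : Fin n → PState} (h : mpReachP f p q) (hI : Inv zhat p) : Inv zhat q := by
  induction h with
  | refl => exact hI
  | tail _ hbc ih => exact Inv_step hcl hbc ih

lemma stuck_step {f : BN n} {zhat : Fin n → PState}
    (hcl : ∀ z ∈ gamma zhat, ∀ i v, zhat i = PState.ofBool v → f z i = v)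
    (i : Fin n) (b : Bool) (hall : ∀ z ∈ gamma zhat, f z i = b)
    {p q : Fin n → PState} (hs : mpStep f p q) (hI : Inv zhat p)
    (hp : p i ≠ PState.ofBool (!b) ∧ p i ≠ (if b then PState.down else PState.up)) :
    q i ≠ PState.ofBool (!b) ∧ q i ≠ (if b then PState.down else PState.up) := by
  obtain ⟨k, hne, heq, hcase⟩ := hs
  by_cases hk : i = k
  · subst hk
    rcases hcase with ⟨hq, h1, z, hzg, hfz⟩ | ⟨hq, hp'⟩ | ⟨hq, h0, z, hzg, hfz⟩ | ⟨hq, hp'⟩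
    · cases b
      · exact absurd ((hall z (gamma_sub hI hzg)).symm.trans hfz) (by simp)
      · rw [hq]; exact ⟨by simp [PState.ofBool], by simp⟩
    · cases b
      · exact absurd hp' hp.2
      · rw [hq]; exact ⟨by simp [PState.ofBool], by simp⟩
    · cases b
      · rw [hq]; exact ⟨by simp [PState.ofBool], by simp⟩
      · exact absurd ((hall z (gamma_sub hI hzg)).symm.trans hfz) (by simp)
    · cases b
      · rw [hq]; exact ⟨by simp [PState.ofBool], by simp⟩
      · exact absurd hp' hp.2
  · rw [← heq i hk]; exact hp

lemma stuck_reach {f : BN n} {zhat : Fin n → PState}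
    (hcl : ∀ z ∈ gamma zhat, ∀ i v, zhat i = PState.ofBool v → f z i = v)
    (i : Fin n) (b : Bool) (hall : ∀ z ∈ gamma zhat, f z i = b)
    {p q : Fin n → PState} (h : mpReachP f p q) (hI : Inv zhat p)
    (hp : p i ≠ PState.ofBool (!b) ∧ p i ≠ (if b then PState.down else PState.up)) :
    q i ≠ PState.ofBool (!b) ∧ q i ≠ (if b then PState.down else PState.up) := by
  induction h with
  | refl => exact hp
  | tail hab hbc ih => exact stuck_step hcl i b hall hbc (Inv_reach hcl hab hI) ih

lemma witness (f : BN n) (x y : Fin n → Bool) (zhat : Fin n → PState)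
    (hy : ∀ y' ∈ mpReach f y, y ∈ mpReach f y')
    (hz : exhaustive f x ∅ zhat) (hyg : y ∈ gamma zhat) :
    ∀ i, ¬ (zhat i).isBool → ∃ z ∈ gamma zhat, f z i = y i := by
  have hcl := closed f x zhat hz
  have hbd := bd_facts f x zhat hz.1
  intro i hi
  by_contra hno
  push_neg at hno
  have hall : ∀ z ∈ gamma zhat, f z i = !(y i) := by
    intro z hzg
    have := hno z hzg
    cases h : f z i <;> cases hyi : y i <;> simp_all
  have hyself : y ∈ gamma (embed y) := fun k v hv => ofBool_inj hv
  set c := y i with hc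
  have hzi : zhat i = (if c then PState.down else PState.up) := by
    cases hzc : zhat i with
    | zero => exact absurd (Or.inl rfl) (hzc ▸ hi)
    | one => exact absurd (Or.inr rfl) (hzc ▸ hi)
    | up =>
      cases hyc : c
      · simp [hzc]
      · obtain ⟨z, hzg, hfz⟩ := (hbd.2 i).1 hzc
        exact absurd ((hall z hzg).symm.trans hfz) (by simp [hyc])
    | down =>
      cases hyc : c
      · obtain ⟨z, hzg, hfz⟩ := (hbd.2 i).2 hzc
        exact absurd ((hall z hzg).symm.trans hfz) (by simp [hyc])
      · simp [hzc]
  set y' := Function.update y i (!c) with hy'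
  have hy'g : y' ∈ gamma zhat := by
    intro k v hv
    by_cases hk : k = i
    · subst hk
      rw [hzi] at hv
      exact absurd hv (by cases hcc : c <;> cases v <;> simp [PState.ofBool])
    · rw [hy', Function.update_of_ne hk]
      exact hyg k v hv
  have hfyi : f y i = !c := hall y hyg
  have step1 : mpStep f (embed y) (Function.update (embed y) i (if c then PState.down else PState.up)) := by
    have hyiz : embed y i = PState.ofBool c := by
      show PState.ofBool (y i) = _; rw [← hc]
    refine ⟨i, ?_, fun j hj => (Function.update_of_ne hj _ _).symm, ?_⟩
    · rw [Function.update_self, hyiz]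
      cases hcc : c <;> simp [PState.ofBool]
    · cases hcc : c
      · rw [hcc] at hyiz hfyi
        exact Or.inl ⟨by simp [Function.update_self], by rw [hyiz]; simp [PState.ofBool],
          y, hyself, by simp [hfyi]⟩
      · rw [hcc] at hyiz hfyi
        exact Or.inr (Or.inr (Or.inl ⟨by simp [Function.update_self],
          by rw [hyiz]; simp [PState.ofBool], y, hyself, by simp [hfyi]⟩))
  have hyi' : embed y' i = PState.ofBool (!c) := by
    show PState.ofBool (y' i) = _
    rw [hy', Function.update_self]
  have step2 : mpStep f (Function.update (embed y) i (if c then PState.down else PState.up)) (embed y') := by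
    refine ⟨i, ?_, ?_, ?_⟩
    · rw [Function.update_self, hyi']
      cases hcc : c <;> simp [PState.ofBool]
    · intro j hj
      rw [Function.update_of_ne hj]
      show PState.ofBool (y j) = PState.ofBool (y' j)
      rw [hy', Function.update_of_ne hj]
    · cases hcc : c
      · rw [hcc] at hyi'
        exact Or.inr (Or.inl ⟨by rw [hyi']; rfl, by simp [Function.update_self]⟩)
      · rw [hcc] at hyi'
        exact Or.inr (Or.inr (Or.inr ⟨by rw [hyi']; rfl, by simp [Function.update_self]⟩))
  have hreach : y' ∈ mpReach f y :=
    Relation.ReflTransGen.head step1 (Relation.ReflTransGen.single step2)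
  have hback : mpReachP f (embed y') (embed y) := hy y' hreach
  have hIy' : Inv zhat (embed y') := by
    intro k v hv
    show PState.ofBool (y' k) = _
    rw [hy'g k v hv]
  have hstart : embed y' i ≠ PState.ofBool (!(!c)) ∧
      embed y' i ≠ (if (!c) then PState.down else PState.up) := by
    rw [hyi']
    cases hcc : c <;> simp [PState.ofBool]
  have hend := stuck_reach hcl i (!c) hall hback hIy' hstart
  apply hend.1
  show PState.ofBool (y i) = _
  rw [← hc]
  cases hcc : c <;> rfl
lemma reach_elim (f : BN n) (C : (Fin n → PState) → Prop) (q : Fin n → PState)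
    (hstep : ∀ p, C p → ∀ j, p j ≠ q j →
      mpStep f p (Function.update p j (q j)) ∧ C (Function.update p j (q j))) :
    ∀ p, C p → mpReachP f p q := by
  have key : ∀ k (p : Fin n → PState),
      (Finset.univ.filter (fun j => p j ≠ q j)).card ≤ k → C p → mpReachP f p q := by
    intro k
    induction k with
    | zero =>
      intro p hcard hC
      have hpq : p = q := by
        funext j
        by_contra hj
        have hm : j ∈ Finset.univ.filter (fun j => p j ≠ q j) := by simp [hj]
        have := Finset.card_pos.mpr ⟨j, hm⟩
        omega
      exact hpq ▸ Relation.ReflTransGen.refl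
    | succ k ih =>
      intro p hcard hC
      by_cases hpq : p = q
      · exact hpq ▸ Relation.ReflTransGen.refl
      · have hex : ∃ j, p j ≠ q j := by
          by_contra h; push_neg at h; exact hpq (funext h)
        obtain ⟨j, hj⟩ := hex
        obtain ⟨hs, hC'⟩ := hstep p hC j hj
        refine Relation.ReflTransGen.head hs (ih _ ?_ hC')
        have hsub : (Finset.univ.filter (fun k' => Function.update p j (q j) k' ≠ q k')) ⊆
            (Finset.univ.filter (fun k' => p k' ≠ q k')).erase j := by
          intro k' hk'
          simp only [Finset.mem_filter, Finset.mem_univ, true_and] at hk'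
          by_cases hkj : k' = j
          · subst hkj; rw [Function.update_self] at hk'; exact absurd rfl hk'
          · rw [Function.update_of_ne hkj] at hk'
            exact Finset.mem_erase.mpr ⟨hkj, by simp [hk']⟩
        have hjm : j ∈ Finset.univ.filter (fun k' => p k' ≠ q k') := by simp [hj]
        have hle := Finset.card_le_card hsub
        rw [Finset.card_erase_of_mem hjm] at hle
        have h2 := Finset.card_pos.mpr ⟨j, hjm⟩
        omega
  intro p hC
  exact key _ p le_rfl hC

end Stmt19Aux

theorem stmt19 {n : ℕ} (f : BN n) (x y : Fin n → Bool)
    (hy : ∀ y' ∈ mpReach f y, y ∈ mpReach f y')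
    (zhat : Fin n → PState) (hz : exhaustive f x ∅ zhat) :
    (y ∈ mpReach f x ↔ y ∈ gamma zhat) ∧
    (y ∈ gamma zhat →
      ∀ i, ¬ (zhat i).isBool → ∃ z ∈ gamma zhat, f z i = y i) := by
  classical
  have hcl := Stmt19Aux.closed f x zhat hz
  have hbd := Stmt19Aux.bd_facts f x zhat hz.1
  have hxI : Stmt19Aux.Inv zhat (embed x) := by
    intro k v hv
    show PState.ofBool (x k) = _
    rw [hbd.1 k v hv]
  have hwitness := Stmt19Aux.witness f x y zhat hy hz
  refine ⟨⟨fun hreach => ?_, fun hyg => ?_⟩, hwitness⟩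
  · intro k v hv
    exact Stmt19Aux.ofBool_inj (Stmt19Aux.Inv_reach hcl hreach hxI k v hv)
  · -- backward direction
    have hwit := hwitness hyg
    set w : Fin n → PState := fun j =>
      if zhat j = PState.zero ∨ zhat j = PState.one then zhat j
      else if y j then PState.up else PState.down with hw
    have hwB : ∀ j, (zhat j = PState.zero ∨ zhat j = PState.one) → w j = zhat j := by
      intro j h; simp only [hw]; rw [if_pos h]
    have hwNB : ∀ j, ¬ (zhat j = PState.zero ∨ zhat j = PState.one) →
        w j = if y j then PState.up else PState.down := by
      intro j h; simp only [hw]; rw [if_neg h]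
    -- C1 configs contain gamma zhat
    have hgsub : ∀ p : Fin n → PState, (∀ j, p j = zhat j ∨ p j = w j) →
        gamma zhat ⊆ gamma p := by
      intro p hC z hzg k v hv
      rcases hC k with h | h
      · exact hzg k v (h ▸ hv)
      · rw [h] at hv
        by_cases hb : zhat k = PState.zero ∨ zhat k = PState.one
        · rw [hwB k hb] at hv
          exact hzg k v hv
        · rw [hwNB k hb] at hv
          exact absurd hv (by cases hyk : y k <;> cases v <;> simp [PState.ofBool])
    have phase1 : mpReachP f zhat w := by
      apply Stmt19Aux.reach_elim f (fun p => ∀ j, p j = zhat j ∨ p j = w j) w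
        ?_ zhat (fun j => Or.inl rfl)
      intro p hC j hjne
      have hpj : p j = zhat j := (hC j).resolve_right hjne
      have hne2 : zhat j ≠ w j := hpj ▸ hjne
      have hnb : ¬ (zhat j = PState.zero ∨ zhat j = PState.one) :=
        fun h => hne2 (hwB j h).symm
      have hwj : w j = if y j then PState.up else PState.down := hwNB j hnb
      have hzj : zhat j = PState.up ∨ zhat j = PState.down := by
        cases h : zhat j
        · exact absurd (Or.inl h) hnb
        · exact Or.inl rfl
        · exact Or.inr rfl
        · exact absurd (Or.inr h) hnb
      obtain ⟨z, hzg, hfz⟩ := hwit j hnb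
      constructor
      · refine ⟨j, ?_, fun k hk => (Function.update_of_ne hk _ _).symm, ?_⟩
        · rw [Function.update_self, hpj]; exact hne2
        · cases hyj : y j
          · refine Or.inr (Or.inr (Or.inl ⟨by rw [Function.update_self, hwj, hyj]; rfl, ?_,
              z, hgsub p hC hzg, by rw [hfz, hyj]⟩))
            rw [hpj]; rcases hzj with h | h <;> rw [h] <;> simp
          · refine Or.inl ⟨by rw [Function.update_self, hwj, hyj]; rfl, ?_,
              z, hgsub p hC hzg, by rw [hfz, hyj]⟩
            rw [hpj]; rcases hzj with h | h <;> rw [h] <;> simp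
      · intro k
        by_cases hk : k = j
        · subst hk; exact Or.inr (by rw [Function.update_self])
        · rw [Function.update_of_ne hk]; exact hC k
    have phase2 : mpReachP f w (embed y) := by
      apply Stmt19Aux.reach_elim f (fun p => ∀ j, p j = w j ∨ p j = embed y j) (embed y)
        ?_ w (fun j => Or.inl rfl)
      intro p hC j hjne
      have hpj : p j = w j := (hC j).resolve_right hjne
      have hne2 : w j ≠ embed y j := hpj ▸ hjne
      have hnb : ¬ (zhat j = PState.zero ∨ zhat j = PState.one) := by
        intro h
        apply hne2
        rw [hwB j h]
        rcases h with h | h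
        · have hyj : y j = false := hyg j false h
          rw [h]; show _ = PState.ofBool (y j); rw [hyj]; rfl
        · have hyj : y j = true := hyg j true h
          rw [h]; show _ = PState.ofBool (y j); rw [hyj]; rfl
      have hwj : w j = if y j then PState.up else PState.down := hwNB j hnb
      constructor
      · refine ⟨j, ?_, fun k hk => (Function.update_of_ne hk _ _).symm, ?_⟩
        · rw [Function.update_self, hpj]; exact hne2
        · cases hyj : y j
          · refine Or.inr (Or.inr (Or.inr ⟨?_, by rw [hpj, hwj, hyj]; rfl⟩))
            rw [Function.update_self]; show PState.ofBool (y j) = _; rw [hyj]; rfl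
          · refine Or.inr (Or.inl ⟨?_, by rw [hpj, hwj, hyj]; rfl⟩)
            rw [Function.update_self]; show PState.ofBool (y j) = _; rw [hyj]; rfl
      · intro k
        by_cases hk : k = j
        · subst hk; exact Or.inr (by rw [Function.update_self])
        · rw [Function.update_of_ne hk]; exact hC k
    have h1 : mpReachP f (embed x) zhat :=
      Relation.ReflTransGen.mono (fun a b (hab : bdStep f ∅ a b) => hab.1) _ _ hz.1
    exact (h1.trans phase1).trans phase2
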